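/- Let F = ℚ(q) be the field of rational functions, and let W be the F-vector space with basis {v_x} indexed by the left I-states x of size k. For each left I-state x of size k, define the canonical basis element v_x^◊ = Σ_z q^{Σ_{i=1}^{n−k}(h_i^z − h_i^x)} v_z, where the sum is over left I-states z of size k with h_i^x ≤ h_i^z < h_{i+1}^x for all 1 ≤ i ≤ n−k. Let (·,·)_S be the symmetric F-bilinear form on W with (v_x, v_y)_S = (k)!_{q²} if x = y and 0 otherwise. Then for left I-states x, y of size k: (v_x^◊, v_y^◊)_S = 0 if x and y are too far, and otherwise (v_x^◊, v_y^◊)_S = q^d · (k)!_{q²} · Π_{i=1}^{n−k} (l_i)_{q²}, where d = Σ_{i=1}^{k} |x_i − y_i| and l_1, …, l_{n−k} are the lengths of the generating intervals between x and y. -/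

import Mathlib

/-- The `i`-th smallest element (0-indexed) of a finite set of natural numbers. -/
def nthElt (s : Finset ℕ) (i : ℕ) : ℕ := (s.sort (· ≤ ·)).getD i 0

/-- The hole set of an I-state: the complement `{0, …, n} \ s`. -/
def holes (n : ℕ) (s : Finset ℕ) : Finset ℕ := Finset.range (n + 1) \ s

/-- The `i`-th hole (0-indexed): `hnth n s i` is `h_{i+1}^s` in 1-indexed notation. -/
def hnth (n : ℕ) (s : Finset ℕ) (i : ℕ) : ℕ := nthElt (holes n s) i


open Finset in
lemma nthElt_eq_emb (s : Finset ℕ) {i : ℕ} (hi : i < s.card) :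
    nthElt s i = s.orderEmbOfFin rfl ⟨i, hi⟩ := by
  rw [Finset.orderEmbOfFin_apply, nthElt, List.getD_eq_getElem _ _ (by simpa using hi)]; rfl

open Finset in
lemma nthElt_mem (s : Finset ℕ) {i : ℕ} (hi : i < s.card) : nthElt s i ∈ s := by
  rw [nthElt_eq_emb s hi]; exact Finset.orderEmbOfFin_mem s rfl _

open Finset in
lemma nthElt_strict (s : Finset ℕ) {i j : ℕ} (hij : i < j) (hj : j < s.card) :
    nthElt s i < nthElt s j := by
  rw [nthElt_eq_emb s (lt_trans hij hj), nthElt_eq_emb s hj]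
  exact (s.orderEmbOfFin rfl).strictMono hij

open Finset in
lemma nthElt_mono (s : Finset ℕ) {i j : ℕ} (hij : i ≤ j) (hj : j < s.card) :
    nthElt s i ≤ nthElt s j := by
  rcases hij.lt_or_eq with h | h
  · exact (nthElt_strict s h hj).le
  · rw [h]

open Finset in
lemma nthElt_exists (s : Finset ℕ) {a : ℕ} (ha : a ∈ s) :
    ∃ i, ∃ _ : i < s.card, nthElt s i = a := by
  have h0 := Finset.range_orderEmbOfFin s (rfl : s.card = s.card)
  have : a ∈ Set.range (s.orderEmbOfFin rfl) := by rw [h0]; exact ha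
  obtain ⟨⟨i, hi⟩, h⟩ := this
  exact ⟨i, hi, by rw [nthElt_eq_emb s hi]; exact h⟩

open Finset in
lemma card_filter_lt (s : Finset ℕ) {i : ℕ} (hi : i < s.card) :
    (s.filter (· < nthElt s i)).card = i := by
  have himg : s.filter (· < nthElt s i) = (Finset.range i).image (nthElt s) := by
    ext a
    simp only [mem_filter, mem_image, mem_range]
    constructor
    · rintro ⟨has, hlt⟩
      obtain ⟨j, hj, rfl⟩ := nthElt_exists s has
      refine ⟨j, ?_, rfl⟩
      by_contra h
      exact absurd (nthElt_mono s (not_lt.1 h) hj) (by omega)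
    · rintro ⟨j, hj, rfl⟩
      exact ⟨nthElt_mem s (hj.trans hi), nthElt_strict s hj hi⟩
  rw [himg, card_image_of_injOn, card_range]
  intro a ha b hb hab
  simp only [coe_range, Set.mem_Iio] at ha hb
  rcases lt_trichotomy a b with h|h|h
  · exact absurd hab (ne_of_lt (nthElt_strict s h (hb.trans hi)))
  · exact h
  · exact absurd hab.symm (ne_of_lt (nthElt_strict s h (ha.trans hi)))

open Finset in
lemma card_filter_le (s : Finset ℕ) {i : ℕ} (hi : i < s.card) :
    (s.filter (· ≤ nthElt s i)).card = i + 1 := by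
  have heq : s.filter (· ≤ nthElt s i) = insert (nthElt s i) (s.filter (· < nthElt s i)) := by
    ext a
    simp only [mem_filter, mem_insert]
    constructor
    · rintro ⟨has, hle⟩
      rcases eq_or_lt_of_le hle with h | h
      exacts [Or.inl h, Or.inr ⟨has, h⟩]
    · rintro (rfl | ⟨has, hlt⟩)
      exacts [⟨nthElt_mem s hi, le_rfl⟩, ⟨has, hlt.le⟩]
  rw [heq, card_insert_of_notMem (by simp), card_filter_lt s hi]

open Finset in
lemma nthElt_le_iff (s : Finset ℕ) {i t : ℕ} (hi : i < s.card) :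
    nthElt s i ≤ t ↔ i < (s.filter (· ≤ t)).card := by
  constructor
  · intro h
    have hsub : s.filter (· ≤ nthElt s i) ⊆ s.filter (· ≤ t) := by
      intro a ha
      simp only [mem_filter] at ha ⊢
      exact ⟨ha.1, ha.2.trans h⟩
    have := (card_filter_le s hi) ▸ card_le_card hsub
    omega
  · intro h
    by_contra hlt
    push_neg at hlt
    have hsub : s.filter (· ≤ t) ⊆ s.filter (· < nthElt s i) := by
      intro a ha
      simp only [mem_filter] at ha ⊢
      exact ⟨ha.1, lt_of_le_of_lt ha.2 hlt⟩
    have := (card_filter_lt s hi) ▸ card_le_card hsub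
    omega

lemma le_nthElt (s : Finset ℕ) {i : ℕ} (hi : i < s.card) : i ≤ nthElt s i := by
  induction i with
  | zero => exact Nat.zero_le _
  | succ m ih =>
    have h1 := nthElt_strict s (show m < m+1 by omega) hi
    have h2 := ih (Nat.lt_of_succ_lt hi)
    omega

lemma nthElt_add_le (s : Finset ℕ) {i d : ℕ} (h : i + d < s.card) :
    nthElt s i + d ≤ nthElt s (i + d) := by
  induction d with
  | zero => simp
  | succ m ih =>
    have h1 := nthElt_strict s (show i + m < i + (m+1) by omega)
      (show i + (m+1) < s.card by omega)
    have h2 := ih (by omega)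
    omega

open Finset in
lemma nthElt_image_strictMono {m : ℕ} {f : Fin m → ℕ} (hf : StrictMono f) {i : ℕ} (hi : i < m) :
    nthElt (Finset.image f Finset.univ) i = f ⟨i, hi⟩ := by
  set s := Finset.image f Finset.univ with hs
  have hcard : s.card = m := by
    rw [hs, card_image_of_injective _ hf.injective, card_univ, Fintype.card_fin]
  have huniq : f = s.orderEmbOfFin hcard := by
    refine Finset.orderEmbOfFin_unique hcard (fun x => ?_) hf
    exact mem_image_of_mem f (mem_univ x)
  rw [nthElt_eq_emb s (by omega)]
  have : s.orderEmbOfFin rfl ⟨i, by omega⟩ = s.orderEmbOfFin hcard ⟨i, hi⟩ := by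
    rw [Finset.orderEmbOfFin_eq_orderEmbOfFin_iff]
  rw [this, ← huniq]

open Finset in
lemma holes_card {n k : ℕ} {s : Finset ℕ} (hs : s ⊆ Finset.range n) (hsk : s.card = k) :
    (holes n s).card = n + 1 - k := by
  rw [holes, card_sdiff_of_subset (hs.trans (Finset.range_subset_range.2 (Nat.le_succ n))), card_range, hsk]

lemma mem_holes {n : ℕ} {s : Finset ℕ} {a : ℕ} : a ∈ holes n s ↔ a ≤ n ∧ a ∉ s := by
  simp [holes, Nat.lt_succ_iff]

lemma hnth_last {n k : ℕ} {s : Finset ℕ} (hs : s ⊆ Finset.range n) (hsk : s.card = k)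
    (hkn : k ≤ n) : hnth n s (n - k) = n := by
  have hc : (holes n s).card = n + 1 - k := holes_card hs hsk
  have hn : n ∈ holes n s := mem_holes.2 ⟨le_rfl, fun h => by simpa using hs h⟩
  obtain ⟨j, hj, hje⟩ := nthElt_exists _ hn
  have h1 : nthElt (holes n s) (n - k) ≤ n :=
    (mem_holes.1 (nthElt_mem _ (show n - k < (holes n s).card by omega))).1
  have h2 := nthElt_mono (holes n s) (show j ≤ n - k by omega)
    (show n - k < (holes n s).card by omega)
  rw [hnth]
  omega

lemma holes_subset_range {n : ℕ} (s : Finset ℕ) : holes n s ⊆ Finset.range (n + 1) :=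
  Finset.sdiff_subset

open Finset in
lemma holes_count {n : ℕ} {s : Finset ℕ} (hs : s ⊆ Finset.range n) {t : ℕ} (ht : t ≤ n) :
    ((holes n s).filter (· ≤ t)).card = t + 1 - (s.filter (· ≤ t)).card := by
  have heq : (holes n s).filter (· ≤ t) = Finset.range (t + 1) \ s.filter (· ≤ t) := by
    ext a
    simp only [holes, Finset.mem_filter, Finset.mem_sdiff, Finset.mem_range]
    constructor
    · rintro ⟨⟨h1, h2⟩, h3⟩
      exact ⟨by omega, fun h => h2 h.1⟩
    · rintro ⟨h1, h2⟩
      refine ⟨⟨by omega, fun h => h2 ⟨h, by omega⟩⟩, by omega⟩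
  rw [heq, Finset.card_sdiff_of_subset (fun a ha => Finset.mem_range.2 (by
    have := (Finset.mem_filter.1 ha).2; omega)), Finset.card_range]

open Finset in
lemma filter_le_count_top {n k : ℕ} {s : Finset ℕ} (hs : s ⊆ Finset.range n) (hsk : s.card = k)
    {t : ℕ} (ht : n ≤ t + 1) : (s.filter (· ≤ t)).card = k := by
  rw [Finset.filter_true_of_mem, hsk]
  intro a ha
  have := Finset.mem_range.1 (hs ha)
  omega

lemma sum_ind (m a b : ℕ) (ha : a ≤ m) (hb : b ≤ m) :
    ∑ t ∈ Finset.range m, (((if a ≤ t then (1:ℤ) else 0) - (if b ≤ t then 1 else 0)).natAbs)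
      = ((a:ℤ) - b).natAbs := by
  have h1 : ∀ t, (((if a ≤ t then (1:ℤ) else 0) - (if b ≤ t then 1 else 0)).natAbs)
      = if t ∈ Finset.Ico (min a b) (max a b) then 1 else 0 := by
    intro t
    simp only [Finset.mem_Ico]
    split_ifs <;> omega
  rw [Finset.sum_congr rfl fun t _ => h1 t, Finset.sum_ite_mem]
  have h2 : Finset.range m ∩ Finset.Ico (min a b) (max a b)
      = Finset.Ico (min a b) (max a b) := by
    apply Finset.inter_eq_right.2
    intro t ht
    simp only [Finset.mem_Ico] at ht
    simp only [Finset.mem_range]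
    omega
  rw [h2, Finset.sum_const, Nat.card_Ico, smul_eq_mul, mul_one]
  omega

lemma sum_ind' (K a b : ℕ) (ha : a ≤ K) (hb : b ≤ K) :
    ∑ i ∈ Finset.range K, (((if i < a then (1:ℤ) else 0) - (if i < b then 1 else 0)).natAbs)
      = ((a:ℤ) - b).natAbs := by
  have h1 : ∀ i, (((if i < a then (1:ℤ) else 0) - (if i < b then 1 else 0)).natAbs)
      = (((if a ≤ i then (1:ℤ) else 0) - (if b ≤ i then 1 else 0)).natAbs) := by
    intro i; split_ifs <;> omega
  rw [Finset.sum_congr rfl fun i _ => h1 i, sum_ind K a b ha hb]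

lemma sum_abs_nthElt {m : ℕ} {s u : Finset ℕ} (hs : s ⊆ Finset.range m) (hu : u ⊆ Finset.range m)
    (hc : s.card = u.card) :
    ∑ i ∈ Finset.range s.card, ((nthElt s i : ℤ) - nthElt u i).natAbs
      = ∑ t ∈ Finset.range m,
          (((s.filter (· ≤ t)).card : ℤ) - ((u.filter (· ≤ t)).card : ℤ)).natAbs := by
  have step1 : ∀ i ∈ Finset.range s.card,
      ((nthElt s i : ℤ) - nthElt u i).natAbs
        = ∑ t ∈ Finset.range m,
            (((if nthElt s i ≤ t then (1:ℤ) else 0) - (if nthElt u i ≤ t then 1 else 0)).natAbs) := by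
    intro i hi
    rw [Finset.mem_range] at hi
    exact (sum_ind m _ _
      (le_of_lt (Finset.mem_range.1 (hs (nthElt_mem s hi))))
      (le_of_lt (Finset.mem_range.1 (hu (nthElt_mem u (hc ▸ hi)))))).symm
  rw [Finset.sum_congr rfl step1, Finset.sum_comm]
  refine Finset.sum_congr rfl fun t _ => ?_
  have step2 : ∀ i ∈ Finset.range s.card,
      (((if nthElt s i ≤ t then (1:ℤ) else 0) - (if nthElt u i ≤ t then 1 else 0)).natAbs)
        = (((if i < (s.filter (· ≤ t)).card then (1:ℤ) else 0)
            - (if i < (u.filter (· ≤ t)).card then 1 else 0)).natAbs) := by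
    intro i hi
    rw [Finset.mem_range] at hi
    congr 2
    · exact if_congr (nthElt_le_iff s hi) rfl rfl
    · exact if_congr (nthElt_le_iff u (hc ▸ hi)) rfl rfl
  rw [Finset.sum_congr rfl step2, sum_ind' _ _ _ (Finset.card_filter_le s _)
    (hc ▸ Finset.card_filter_le u _)]

lemma dist_holes_eq {n k : ℕ} (hkn : k ≤ n) {x y : Finset ℕ}
    (hx : x ⊆ Finset.range n) (hy : y ⊆ Finset.range n)
    (hxk : x.card = k) (hyk : y.card = k) :
    ∑ i ∈ Finset.range (n - k), ((hnth n x i : ℤ) - hnth n y i).natAbs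
      = ∑ i ∈ Finset.range k, ((nthElt x i : ℤ) - nthElt y i).natAbs := by
  have hHx : (holes n x).card = n + 1 - k := holes_card hx hxk
  have hHy : (holes n y).card = n + 1 - k := holes_card hy hyk
  have hxsub : holes n x ⊆ Finset.range (n + 1) := holes_subset_range x
  have hysub : holes n y ⊆ Finset.range (n + 1) := holes_subset_range y
  have hext : ∑ i ∈ Finset.range (n - k), ((hnth n x i : ℤ) - hnth n y i).natAbs
      = ∑ i ∈ Finset.range (n + 1 - k), ((hnth n x i : ℤ) - hnth n y i).natAbs := by
    have h : n + 1 - k = (n - k) + 1 := by omega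
    rw [h, Finset.sum_range_succ, hnth_last hx hxk hkn, hnth_last hy hyk hkn]
    simp
  have hmain := sum_abs_nthElt (m := n + 1) hxsub hysub (by rw [hHx, hHy])
  rw [hHx] at hmain
  have hmain2 := sum_abs_nthElt (m := n) hx hy (by rw [hxk, hyk])
  rw [hxk] at hmain2
  rw [hext]
  show ∑ i ∈ Finset.range (n + 1 - k),
    ((nthElt (holes n x) i : ℤ) - nthElt (holes n y) i).natAbs = _
  rw [hmain, hmain2]
  rw [Finset.sum_range_succ]
  have hlast : ((((holes n x).filter (· ≤ n)).card : ℤ)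
      - (((holes n y).filter (· ≤ n)).card : ℤ)).natAbs = 0 := by
    rw [filter_le_count_top hxsub hHx (by omega), filter_le_count_top hysub hHy (by omega)]
    simp
  rw [hlast, add_zero]
  refine Finset.sum_congr rfl fun t ht => ?_
  rw [Finset.mem_range] at ht
  rw [holes_count hx (by omega), holes_count hy (by omega)]
  have h1 : (x.filter (· ≤ t)).card ≤ t + 1 := by
    have h : x.filter (· ≤ t) ⊆ Finset.range (t + 1) := fun a ha => by
      simp only [Finset.mem_filter] at ha; exact Finset.mem_range.2 (by omega)
    simpa using Finset.card_le_card h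
  have h2 : (y.filter (· ≤ t)).card ≤ t + 1 := by
    have h : y.filter (· ≤ t) ⊆ Finset.range (t + 1) := fun a ha => by
      simp only [Finset.mem_filter] at ha; exact Finset.mem_range.2 (by omega)
    simpa using Finset.card_le_card h
  omega

lemma toofar_empty_interval {n k : ℕ} (hkn : k ≤ n) {x y : Finset ℕ}
    (hx : x ⊆ Finset.range n) (hy : y ⊆ Finset.range n) (hxk : x.card = k) (hyk : y.card = k)
    {i : ℕ} (hik : i < k) (hfar : nthElt y i + 2 ≤ nthElt x i) :
    ∃ j < n - k,
      min (hnth n x (j + 1)) (hnth n y (j + 1)) ≤ max (hnth n x j) (hnth n y j) := by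
  have hxik : i < x.card := by omega
  have hyik : i < y.card := by omega
  set xi := nthElt x i with hxi
  set yi := nthElt y i with hyi
  have hxin : xi < n := Finset.mem_range.1 (hx (nthElt_mem x hxik))
  have hyi_ge : i ≤ yi := le_nthElt y hyik
  have hxi_le : xi ≤ n - k + i := by
    have h1 : xi + (k - 1 - i) ≤ nthElt x (i + (k - 1 - i)) :=
      nthElt_add_le x (by omega)
    have h2 : nthElt x (i + (k - 1 - i)) < n := by
      exact Finset.mem_range.1 (hx (nthElt_mem x (by omega)))
    omega
  have hHx : (holes n x).card = n + 1 - k := holes_card hx hxk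
  have hHy : (holes n y).card = n + 1 - k := holes_card hy hyk
  refine ⟨yi - i, by omega, ?_⟩
  have hcy : (y.filter (· ≤ yi)).card = i + 1 := card_filter_le y hyik
  have ha : yi + 1 ≤ hnth n y (yi - i) := by
    by_contra hcon
    push_neg at hcon
    have h3 : hnth n y (yi - i) ≤ yi := by omega
    have h4 := (nthElt_le_iff (holes n y) (show yi - i < (holes n y).card by omega)).1 h3
    rw [holes_count hy (by omega), hcy] at h4
    omega
  have hcx : (x.filter (· ≤ yi + 1)).card ≤ i := by
    by_contra hcon
    push_neg at hcon
    have := (nthElt_le_iff x (t := yi + 1) hxik).2 (by omega)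
    omega
  have hb : hnth n x (yi - i + 1) ≤ yi + 1 := by
    refine (nthElt_le_iff (holes n x) (show yi - i + 1 < (holes n x).card by omega)).2 ?_
    rw [holes_count hx (by omega)]
    omega
  have h5 : min (hnth n x (yi - i + 1)) (hnth n y (yi - i + 1)) ≤ hnth n x (yi - i + 1) :=
    min_le_left _ _
  have h6 : hnth n y (yi - i) ≤ max (hnth n x (yi - i)) (hnth n y (yi - i)) := le_max_right _ _
  omega

open Finset in
lemma hnth_reconstruct {n k : ℕ} (hkn : k ≤ n) {p : Fin (n - k) → ℕ} (hp : StrictMono p)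
    (hpn : ∀ j, p j < n) :
    (Finset.range n \ Finset.image p Finset.univ).card = k ∧
    ∀ j (hj : j < n - k),
      hnth n (Finset.range n \ Finset.image p Finset.univ) j = p ⟨j, hj⟩ := by
  set z := Finset.range n \ Finset.image p Finset.univ with hz
  have himg_sub : Finset.image p Finset.univ ⊆ Finset.range n := by
    intro a ha
    obtain ⟨j, _, rfl⟩ := Finset.mem_image.1 ha
    exact Finset.mem_range.2 (hpn j)
  have hcard : z.card = k := by
    rw [hz, Finset.card_sdiff_of_subset himg_sub, Finset.card_range,
      Finset.card_image_of_injective _ hp.injective, Finset.card_univ, Fintype.card_fin]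
    omega
  refine ⟨hcard, ?_⟩
  set q : Fin (n - k + 1) → ℕ := fun j => if h : (j : ℕ) < n - k then p ⟨j, h⟩ else n with hq
  have hq_mono : StrictMono q := by
    intro ⟨a, ha⟩ ⟨b, hb⟩ hab
    simp only [Fin.mk_lt_mk] at hab
    rw [hq]
    dsimp only
    split_ifs with h1 h2 h2
    · exact hp (by simpa using hab)
    · exact hpn _
    · omega
    · omega
  have hholes : holes n z = Finset.image q Finset.univ := by
    ext a
    simp only [mem_holes, hz, Finset.mem_sdiff, Finset.mem_range, Finset.mem_image,
      Finset.mem_univ, true_and]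
    constructor
    · rintro ⟨han, ha⟩
      push_neg at ha
      rcases Nat.lt_or_ge a n with h | h
      · obtain ⟨j, hj⟩ := ha h
        exact ⟨⟨j, by omega⟩, by simp [hq, hj]⟩
      · exact ⟨⟨n - k, by omega⟩, by simp [hq]; omega⟩
    · rintro ⟨⟨j, hj⟩, rfl⟩
      rw [hq]
      dsimp only
      split_ifs with h
      · refine ⟨(hpn _).le, ?_⟩
        rintro ⟨-, habs⟩
        exact habs ⟨⟨j, h⟩, rfl⟩
      · refine ⟨le_rfl, ?_⟩
        rintro ⟨habs, -⟩
        omega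
  intro j hj
  rw [hnth, hholes, nthElt_image_strictMono hq_mono (show j < n - k + 1 by omega)]
  simp only [hq]
  rw [dif_pos hj]

open Finset in
lemma reconstruct_self {n k : ℕ} (hkn : k ≤ n) {z : Finset ℕ} (hzs : z ⊆ Finset.range n)
    (hzk : z.card = k) :
    Finset.range n \ Finset.image (fun j : Fin (n - k) => hnth n z j) Finset.univ = z := by
  have hc : (holes n z).card = n + 1 - k := holes_card hzs hzk
  ext a
  simp only [Finset.mem_sdiff, Finset.mem_range, Finset.mem_image, Finset.mem_univ, true_and]
  constructor
  · rintro ⟨han, ha⟩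
    by_contra haz
    have hah : a ∈ holes n z := mem_holes.2 ⟨by omega, haz⟩
    obtain ⟨j, hjc, hje⟩ := nthElt_exists _ hah
    have hjn : j ≠ n - k := by
      rintro rfl
      rw [← hnth, hnth_last hzs hzk hkn] at hje
      omega
    exact ha ⟨⟨j, by omega⟩, hje⟩
  · intro haz
    refine ⟨Finset.mem_range.1 (hzs haz), ?_⟩
    rintro ⟨j, hje⟩
    have hmem : hnth n z j ∈ holes n z := nthElt_mem _ (by omega)
    rw [hje] at hmem
    exact (mem_holes.1 hmem).2 haz

lemma fin_strictMono_of_lt_succ {N : ℕ} {p : Fin N → ℕ}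
    (h : ∀ i : ℕ, (hi : i + 1 < N) → p ⟨i, by omega⟩ < p ⟨i + 1, hi⟩) : StrictMono p := by
  have key : ∀ b (hb : b < N) a (ha : a < N), a < b → p ⟨a, ha⟩ < p ⟨b, hb⟩ := by
    intro b
    induction b with
    | zero => omega
    | succ m ih =>
      intro hb a ha hab
      rcases Nat.lt_or_ge a m with h' | h'
      · exact (ih (by omega) a ha h').trans (h m hb)
      · have : a = m := by omega
        subst this
        exact h a hb
  intro ⟨a, ha⟩ ⟨b, hb⟩ hab
  exact key b hb a ha (by simpa using hab)

/-- Two I-states of size `k` are too far if `|x_i − y_i| > 1` for some `i`. -/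
def TooFar (k : ℕ) (x y : Finset ℕ) : Prop :=
  ∃ i < k, 1 < ((nthElt x i : ℤ) - (nthElt y i : ℤ)).natAbs

/-- `z` contributes to the canonical basis element `v_x^◊`:
`h_i^x ≤ h_i^z < h_{i+1}^x` for all `1 ≤ i ≤ n − k` (0-indexed). -/
def CanonAdm (n k : ℕ) (x z : Finset ℕ) : Prop :=
  ∀ i < n - k, hnth n x i ≤ hnth n z i ∧ hnth n z i < hnth n x (i + 1)

instance (n k : ℕ) (x z : Finset ℕ) : Decidable (CanonAdm n k x z) := by
  unfold CanonAdm; infer_instance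

/-- The nonsymmetric quantum integer `(m)_{q²} = 1 + q² + ⋯ + q^{2(m−1)}` in `ℚ(q)`. -/
noncomputable def qIntF (m : ℕ) : RatFunc ℚ :=
  ∑ j ∈ Finset.range m, RatFunc.X ^ (2 * j)

/-- The nonsymmetric quantum factorial `(k)!_{q²}` in `ℚ(q)`. -/
noncomputable def qFactF (k : ℕ) : RatFunc ℚ :=
  ∏ j ∈ Finset.range k, qIntF (j + 1)


lemma geom_sum_interval (a b m : ℕ) :
    ∑ c ∈ Finset.Ico (max a b) m, (RatFunc.X : RatFunc ℚ) ^ ((c - a) + (c - b)) =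
      RatFunc.X ^ (max a b - min a b) * qIntF (m - max a b) := by
  rw [Finset.sum_Ico_eq_sum_range, qIntF, Finset.mul_sum]
  refine Finset.sum_congr rfl fun j _ => ?_
  rw [← pow_add]
  congr 1
  rcases Nat.le_total a b with h | h <;> simp [Nat.max_eq_right, Nat.max_eq_left, h] <;> omega

/-- A vector of the weight space `(V^{⊗n})_k`, written in coordinates with respect to the
standard basis `{v_z}` indexed by left I-states `z` of size `k`. -/
noncomputable def canonVec (n k : ℕ) (x : Finset ℕ) : Finset ℕ → RatFunc ℚ := fun z =>
  if z ⊆ Finset.range n ∧ z.card = k ∧ CanonAdm n k x z then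
    RatFunc.X ^ (∑ i ∈ Finset.range (n - k), (hnth n z i - hnth n x i))
  else 0

/-- The Sartori bilinear form: `(k)!_{q²}` times the identity matrix in the standard basis. -/
noncomputable def formS (n k : ℕ) (f g : Finset ℕ → RatFunc ℚ) : RatFunc ℚ :=
  qFactF k * ∑ z ∈ (Finset.range n).powerset.filter (fun z => z.card = k), f z * g z

/-- `(v_x^◊, v_y^◊)_S = 0` if `x`, `y` are too far, and otherwise
`(v_x^◊, v_y^◊)_S = q^d (k)!_{q²} Π_{i=1}^{n−k} (l_i)_{q²}` with
`d = Σ_i |x_i − y_i|` and `l_i` the lengths of the generating intervals. -/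
theorem sartori_form_on_canonical (n k : ℕ) (hkn : k ≤ n) (x y : Finset ℕ)
    (hx : x ⊆ Finset.range n) (hy : y ⊆ Finset.range n)
    (hxk : x.card = k) (hyk : y.card = k) :
    (TooFar k x y → formS n k (canonVec n k x) (canonVec n k y) = 0) ∧
    (¬ TooFar k x y →
      formS n k (canonVec n k x) (canonVec n k y) =
        RatFunc.X ^ (∑ i ∈ Finset.range k, ((nthElt x i : ℤ) - (nthElt y i : ℤ)).natAbs) *
          qFactF k *
          ∏ i ∈ Finset.range (n - k),
            qIntF (min (hnth n x (i + 1)) (hnth n y (i + 1))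
              - max (hnth n x i) (hnth n y i))) := by
  classical
  have hcardHx : (holes n x).card = n + 1 - k := holes_card hx hxk
  have hcardHy : (holes n y).card = n + 1 - k := holes_card hy hyk
  have hhx_le : ∀ i, i ≤ n - k → hnth n x i ≤ n := fun i hi =>
    (mem_holes.1 (nthElt_mem _ (show i < (holes n x).card by omega))).1
  have hhy_le : ∀ i, i ≤ n - k → hnth n y i ≤ n := fun i hi =>
    (mem_holes.1 (nthElt_mem _ (show i < (holes n y).card by omega))).1
  set I : Fin (n - k) → Finset ℕ := fun i =>
    Finset.Ico (max (hnth n x i) (hnth n y i))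
      (min (hnth n x (i + 1)) (hnth n y (i + 1))) with hI
  set A := (Finset.range n).powerset.filter (fun z => z.card = k) with hA
  have key : ∑ z ∈ A, canonVec n k x z * canonVec n k y z =
      RatFunc.X ^ (∑ i ∈ Finset.range k, ((nthElt x i : ℤ) - nthElt y i).natAbs) *
        ∏ i ∈ Finset.range (n - k),
          qIntF (min (hnth n x (i + 1)) (hnth n y (i + 1))
            - max (hnth n x i) (hnth n y i)) := by
    have hstep1 : ∀ z ∈ A, canonVec n k x z * canonVec n k y z
        = if CanonAdm n k x z ∧ CanonAdm n k y z then
            RatFunc.X ^ ((∑ i ∈ Finset.range (n - k), (hnth n z i - hnth n x i))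
              + ∑ i ∈ Finset.range (n - k), (hnth n z i - hnth n y i)) else 0 := by
      intro z hz
      rw [hA, Finset.mem_filter, Finset.mem_powerset] at hz
      rw [canonVec, canonVec]
      rcases Classical.em (CanonAdm n k x z) with hcx | hcx <;>
        rcases Classical.em (CanonAdm n k y z) with hcy | hcy <;>
          simp [hz.1, hz.2, hcx, hcy, pow_add]
    rw [Finset.sum_congr rfl hstep1, ← Finset.sum_filter]
    set B := A.filter (fun z => CanonAdm n k x z ∧ CanonAdm n k y z) with hB
    have hmemB : ∀ z, z ∈ B ↔
        z ⊆ Finset.range n ∧ z.card = k ∧ CanonAdm n k x z ∧ CanonAdm n k y z := by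
      intro z
      rw [hB, Finset.mem_filter, hA, Finset.mem_filter, Finset.mem_powerset]
      tauto
    have hbij : ∑ z ∈ B,
        RatFunc.X ^ ((∑ i ∈ Finset.range (n - k), (hnth n z i - hnth n x i))
          + ∑ i ∈ Finset.range (n - k), (hnth n z i - hnth n y i))
        = ∑ p ∈ Fintype.piFinset I, ∏ j : Fin (n - k),
            (RatFunc.X : RatFunc ℚ) ^ ((p j - hnth n x j) + (p j - hnth n y j)) := by
      refine Finset.sum_nbij' (fun z => fun j : Fin (n - k) => hnth n z j)
        (fun p => Finset.range n \ Finset.image p Finset.univ) ?_ ?_ ?_ ?_ ?_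
      · -- maps into piFinset
        intro z hz
        obtain ⟨hz1, hz2, hz3, hz4⟩ := (hmemB z).1 hz
        refine Fintype.mem_piFinset.2 fun j => ?_
        obtain ⟨hx1, hx2⟩ := hz3 j j.2
        obtain ⟨hy1, hy2⟩ := hz4 j j.2
        rw [hI]
        exact Finset.mem_Ico.2 ⟨max_le hx1 hy1, lt_min hx2 hy2⟩
      · -- maps back into B
        intro p hp
        have hpb : ∀ j : Fin (n - k), max (hnth n x j) (hnth n y j) ≤ p j ∧
            p j < min (hnth n x (j + 1)) (hnth n y (j + 1)) := fun j => by
          have hm := Fintype.mem_piFinset.1 hp j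
          rw [hI] at hm
          exact Finset.mem_Ico.1 hm
        have hpmono : StrictMono p := by
          refine fin_strictMono_of_lt_succ fun i hi => ?_
          have h1 := (hpb ⟨i, by omega⟩).2
          have h2 := (hpb ⟨i + 1, hi⟩).1
          simp only at h1 h2
          calc p ⟨i, by omega⟩ < min (hnth n x (i + 1)) (hnth n y (i + 1)) := h1
            _ ≤ hnth n x (i + 1) := min_le_left _ _
            _ ≤ max (hnth n x (i + 1)) (hnth n y (i + 1)) := le_max_left _ _
            _ ≤ p ⟨i + 1, hi⟩ := h2
        have hpn : ∀ j : Fin (n - k), p j < n := fun j => by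
          have h1 := (hpb j).2
          have h2 := hhx_le (j + 1) (by omega)
          have h3 : min (hnth n x (j + 1)) (hnth n y (j + 1)) ≤ hnth n x (j + 1) :=
            min_le_left _ _
          omega
        obtain ⟨hcard, hvals⟩ := hnth_reconstruct hkn hpmono hpn
        refine (hmemB _).2 ⟨Finset.sdiff_subset, hcard, ?_, ?_⟩
        · intro i hi
          rw [hvals i hi]
          have hb := hpb ⟨i, hi⟩
          simp only at hb
          constructor
          · calc hnth n x i ≤ max (hnth n x i) (hnth n y i) := le_max_left _ _
              _ ≤ p ⟨i, hi⟩ := hb.1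
          · calc p ⟨i, hi⟩ < min (hnth n x (i + 1)) (hnth n y (i + 1)) := hb.2
              _ ≤ hnth n x (i + 1) := min_le_left _ _
        · intro i hi
          rw [hvals i hi]
          have hb := hpb ⟨i, hi⟩
          simp only at hb
          constructor
          · calc hnth n y i ≤ max (hnth n x i) (hnth n y i) := le_max_right _ _
              _ ≤ p ⟨i, hi⟩ := hb.1
          · calc p ⟨i, hi⟩ < min (hnth n x (i + 1)) (hnth n y (i + 1)) := hb.2
              _ ≤ hnth n y (i + 1) := min_le_right _ _
      · -- left inverse
        intro z hz
        obtain ⟨hz1, hz2, -, -⟩ := (hmemB z).1 hz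
        exact reconstruct_self hkn hz1 hz2
      · -- right inverse
        intro p hp
        have hpb : ∀ j : Fin (n - k), max (hnth n x j) (hnth n y j) ≤ p j ∧
            p j < min (hnth n x (j + 1)) (hnth n y (j + 1)) := fun j => by
          have hm := Fintype.mem_piFinset.1 hp j
          rw [hI] at hm
          exact Finset.mem_Ico.1 hm
        have hpmono : StrictMono p := by
          refine fin_strictMono_of_lt_succ fun i hi => ?_
          have h1 := (hpb ⟨i, by omega⟩).2
          have h2 := (hpb ⟨i + 1, hi⟩).1
          simp only at h1 h2
          calc p ⟨i, by omega⟩ < min (hnth n x (i + 1)) (hnth n y (i + 1)) := h1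
            _ ≤ hnth n x (i + 1) := min_le_left _ _
            _ ≤ max (hnth n x (i + 1)) (hnth n y (i + 1)) := le_max_left _ _
            _ ≤ p ⟨i + 1, hi⟩ := h2
        have hpn : ∀ j : Fin (n - k), p j < n := fun j => by
          have h1 := (hpb j).2
          have h2 := hhx_le (j + 1) (by omega)
          have h3 : min (hnth n x (j + 1)) (hnth n y (j + 1)) ≤ hnth n x (j + 1) :=
            min_le_left _ _
          omega
        obtain ⟨-, hvals⟩ := hnth_reconstruct hkn hpmono hpn
        funext j
        show hnth n (Finset.range n \ Finset.image p Finset.univ) ↑j = p j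
        rw [hvals j j.2]
      · -- summand equality
        intro z hz
        rw [Finset.prod_pow_eq_pow_sum]
        congr 1
        rw [← Finset.sum_add_distrib,
          ← Fin.sum_univ_eq_sum_range
            (fun i => (hnth n z i - hnth n x i) + (hnth n z i - hnth n y i)) (n - k)]
    rw [hbij, ← Finset.prod_univ_sum I
      (fun j c => (RatFunc.X : RatFunc ℚ) ^ ((c - hnth n x j) + (c - hnth n y j)))]
    have hgeom : ∀ j : Fin (n - k),
        (∑ c ∈ I j, (RatFunc.X : RatFunc ℚ) ^ ((c - hnth n x j) + (c - hnth n y j)))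
        = RatFunc.X ^ (max (hnth n x j) (hnth n y j) - min (hnth n x j) (hnth n y j))
            * qIntF (min (hnth n x (j + 1)) (hnth n y (j + 1))
              - max (hnth n x j) (hnth n y j)) := fun j => by
      rw [hI]
      exact geom_sum_interval _ _ _
    rw [Finset.prod_congr rfl fun j _ => hgeom j, Finset.prod_mul_distrib,
      Finset.prod_pow_eq_pow_sum]
    congr 1
    · congr 1
      rw [Fin.sum_univ_eq_sum_range
        (fun i => max (hnth n x i) (hnth n y i) - min (hnth n x i) (hnth n y i)) (n - k),
        ← dist_holes_eq hkn hx hy hxk hyk]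
      exact Finset.sum_congr rfl fun i _ => by omega
    · rw [Fin.prod_univ_eq_prod_range
        (fun i => qIntF (min (hnth n x (i + 1)) (hnth n y (i + 1))
          - max (hnth n x i) (hnth n y i))) (n - k)]
  constructor
  · rintro ⟨i, hik, hfar⟩
    have hcases : nthElt y i + 2 ≤ nthElt x i ∨ nthElt x i + 2 ≤ nthElt y i := by omega
    have hzero : ∃ j < n - k,
        min (hnth n x (j + 1)) (hnth n y (j + 1)) ≤ max (hnth n x j) (hnth n y j) := by
      rcases hcases with h | h
      · exact toofar_empty_interval hkn hx hy hxk hyk hik h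
      · obtain ⟨j, hj, hle⟩ := toofar_empty_interval hkn hy hx hyk hxk hik h
        exact ⟨j, hj, by rw [min_comm (hnth n x (j+1)), max_comm (hnth n x j)]; exact hle⟩
    obtain ⟨j, hj, hle⟩ := hzero
    rw [formS, key, Finset.prod_eq_zero (Finset.mem_range.2 hj)
      (by rw [show min (hnth n x (j + 1)) (hnth n y (j + 1))
            - max (hnth n x j) (hnth n y j) = 0 by omega]; simp [qIntF])]
    ring
  · intro _
    rw [formS, key]
    ring
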